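/- arXiv:math/0601168 — 2 statements merged into one kernel-verified Lean document; each statement's English description precedes it below -/
import Mathlib

section
/- Let 𝔨 be a finite-dimensional real Lie algebra whose Killing form κ is negative definite (κ(x,x) < 0 for all x ≠ 0). Let 𝔱 ⊆ 𝔨 be a maximal abelian Lie subalgebra (𝔱 is abelian and is not properly contained in any abelian Lie subalgebra of 𝔨), and let 𝔪 be a Lie subalgebra of 𝔨 with 𝔱 ⊆ 𝔪 and 𝔪 ≠ 𝔨. Then dim_ℝ 𝔨 − dim_ℝ 𝔪 ≥ 2. -/
/-- Key codimension estimate in the proof of Lemma 3.1: let `𝔨` be a finite-dimensional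
real Lie algebra whose Killing form is negative definite, let `𝔱 ⊆ 𝔨` be a maximal
abelian Lie subalgebra, and let `𝔪` be a proper Lie subalgebra of `𝔨` containing `𝔱`.
Then the codimension of `𝔪` in `𝔨` is at least `2`. -/
theorem codim_ge_two_of_contains_maximal_abelian
    {K : Type*} [LieRing K] [LieAlgebra ℝ K] [Module.Finite ℝ K]
    (hkilling : ∀ x : K, x ≠ 0 → killingForm ℝ K x x < 0)
    (t m : LieSubalgebra ℝ K)
    (ht_ab : IsLieAbelian t)
    (ht_max : ∀ t' : LieSubalgebra ℝ K, IsLieAbelian t' → t ≤ t' → t' = t)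
    (htm : t ≤ m) (hm : m ≠ ⊤) :
    2 ≤ Module.finrank ℝ K - Module.finrank ℝ m := by
  classical
  set B := killingForm ℝ K with hB
  have hsymm : ∀ a b : K, B a b = B b a := LieModule.traceForm_comm ℝ K K
  have hrefl : B.IsRefl := fun a b h => by rw [hsymm]; exact h
  have hnd : B.Nondegenerate := by
    constructor
    all_goals
      intro a ha
      by_contra h
      exact absurd (ha a) (ne_of_lt (hkilling a h))
  set W : Submodule ℝ K := m.toSubmodule with hWdef
  have hW : W ≠ ⊤ := by
    intro h
    apply hm
    ext z
    simp only [LieSubalgebra.mem_top, iff_true]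
    have : z ∈ W := h ▸ Submodule.mem_top
    exact this
  by_contra hcodim
  push_neg at hcodim
  have hfr : Module.finrank ℝ m = Module.finrank ℝ W := rfl
  have hlt : Module.finrank ℝ W < Module.finrank ℝ K :=
    Submodule.finrank_lt hW
  have hone : Module.finrank ℝ K - Module.finrank ℝ W = 1 := by omega
  have horth : Module.finrank ℝ (B.orthogonal W) = 1 := by
    rw [LinearMap.BilinForm.finrank_orthogonal hnd, hone]
  obtain ⟨x, hxW, hx0⟩ := (B.orthogonal W).ne_bot_iff.mp (by
    intro h
    rw [h, finrank_bot] at horth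
    exact absurd horth one_ne_zero.symm)
  -- the orthogonal complement is spanned by x
  have hspan : B.orthogonal W = Submodule.span ℝ {x} := by
    refine (Submodule.eq_of_le_of_finrank_le ?_ ?_).symm
    · rwa [Submodule.span_le, Set.singleton_subset_iff]
    · rw [horth, finrank_span_singleton hx0]
  -- brackets of m with x stay in the orthogonal complement
  have hkey : ∀ y ∈ m, ⁅y, x⁆ ∈ B.orthogonal W := by
    intro y hy
    intro z hz
    have hyz : ⁅y, z⁆ ∈ W := m.lie_mem hy hz
    have h0 : B x ⁅y, z⁆ = 0 := by rw [hsymm]; exact hxW ⁅y, z⁆ hyz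
    have h2 : B ⁅y, x⁆ z = - B x ⁅y, z⁆ := LieModule.traceForm_apply_lie_apply' ℝ K K y x z
    show B z ⁅y, x⁆ = 0
    rw [hsymm, h2, h0, neg_zero]
  -- brackets of m with x vanish
  have hzero : ∀ y ∈ m, ⁅y, x⁆ = 0 := by
    intro y hy
    have hmem : ⁅y, x⁆ ∈ Submodule.span ℝ {x} := hspan ▸ hkey y hy
    obtain ⟨c, hc⟩ := Submodule.mem_span_singleton.mp hmem
    have h1 : B ⁅y, x⁆ x = - B x ⁅y, x⁆ := LieModule.traceForm_apply_lie_apply' ℝ K K y x x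
    rw [← hc] at h1
    have h1' : c * B x x = -(c * B x x) := by simpa using h1
    have hBxx : B x x ≠ 0 := ne_of_lt (hkilling x hx0)
    have hc0 : c = 0 := by
      have hz0 : c * B x x = 0 := by linarith
      exact (mul_eq_zero.mp hz0).resolve_right hBxx
    rw [← hc, hc0, zero_smul]
  -- the subalgebra generated by t and x
  have habscase : ∀ a ∈ t.toSubmodule ⊔ Submodule.span ℝ {x},
      ∀ b ∈ t.toSubmodule ⊔ Submodule.span ℝ {x}, ⁅a, b⁆ = (0 : K) := by
    intro a ha b hb
    obtain ⟨p, hp, u, hu, rfl⟩ := Submodule.mem_sup.mp ha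
    obtain ⟨q, hq, v, hv, rfl⟩ := Submodule.mem_sup.mp hb
    obtain ⟨r, rfl⟩ := Submodule.mem_span_singleton.mp hu
    obtain ⟨s, rfl⟩ := Submodule.mem_span_singleton.mp hv
    have hpq : ⁅p, q⁆ = (0 : K) := by
      have := ht_ab.trivial ⟨p, hp⟩ ⟨q, hq⟩
      exact congrArg (Subtype.val) this
    have hpx : ⁅p, x⁆ = (0 : K) := hzero p (htm hp)
    have hqx : ⁅q, x⁆ = (0 : K) := hzero q (htm hq)
    have hxq : ⁅x, q⁆ = (0 : K) := by rw [← lie_skew, hqx, neg_zero]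
    simp [lie_add, add_lie, lie_smul, smul_lie, hpq, hpx, hxq]
  let t' : LieSubalgebra ℝ K :=
    { (t.toSubmodule ⊔ Submodule.span ℝ {x} : Submodule ℝ K) with
      lie_mem' := fun {a b} ha hb => by
        have : ⁅a, b⁆ = (0 : K) := habscase a ha b hb
        rw [this]
        exact Submodule.zero_mem _ }
  have ht'_ab : IsLieAbelian t' := by
    constructor
    intro a b
    ext
    exact habscase a.1 a.2 b.1 b.2
  have hle : t ≤ t' := fun z hz =>
    Submodule.mem_sup_left (show z ∈ t.toSubmodule from hz)
  have heq : t' = t := ht_max t' ht'_ab hle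
  have hxt : x ∈ t' := Submodule.mem_sup_right (Submodule.mem_span_singleton_self x)
  rw [heq] at hxt
  have hxm : x ∈ W := htm hxt
  have : B x x = 0 := hxW x hxm
  exact absurd this (ne_of_lt (hkilling x hx0))
end

section
/- Let ι be a finite index set and let (G_i)_{i ∈ ι} be groups such that for each i the quotient group G_i / Z(G_i) has trivial centre (for instance, each G_i / Z(G_i) is a nonabelian simple group). Let G = ∏_{i ∈ ι} G_i and let N be a normal subgroup of G such that for each i, the intersection of N with the i-th factor subgroup G_i ⊆ G is contained in the centre Z(G_i). Then N is contained in the centre Z(G) = ∏_{i ∈ ι} Z(G_i) of G. -/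
/-- Group-theoretic claim in the proof of Proposition 2.5: let `(G i)` be a finite family
of groups such that each quotient `G i / Z(G i)` has trivial centre, and let `N` be a
normal subgroup of the product `∏ i, G i` whose intersection with each factor subgroup
`G i` is contained in the centre `Z(G i)`.  Then `N` is contained in the centre of the
product. -/
theorem normal_le_center_of_factor_intersections_central
    {ι : Type*} [Finite ι] (G : ι → Type*) [∀ i, Group (G i)]
    (hcent : ∀ i, Subgroup.center (G i ⧸ Subgroup.center (G i)) = ⊥)
    (N : Subgroup (∀ i, G i)) (hNnormal : N.Normal)
    (hN : ∀ i, ∀ x : ∀ j, G j, x ∈ N → (∀ j, j ≠ i → x j = 1) →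
      x i ∈ Subgroup.center (G i)) :
    N ≤ Subgroup.center (∀ i, G i) := by
  classical
  intro x hx
  rw [Subgroup.mem_center_iff]
  intro y
  funext i
  have key : ∀ g : G i, g * x i * g⁻¹ * (x i)⁻¹ ∈ Subgroup.center (G i) := by
    intro g
    have h1 : Pi.mulSingle i g * x * (Pi.mulSingle i g)⁻¹ ∈ N :=
      hNnormal.conj_mem x hx (Pi.mulSingle i g)
    have hcN : Pi.mulSingle i g * x * (Pi.mulSingle i g)⁻¹ * x⁻¹ ∈ N :=
      mul_mem h1 (inv_mem hx)
    have := hN i _ hcN (by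
      intro j hj
      simp [Pi.mulSingle, Function.update_of_ne hj])
    simpa using this
  have hxi : x i ∈ Subgroup.center (G i) := by
    have hq : (↑(x i) : G i ⧸ Subgroup.center (G i)) ∈
        Subgroup.center (G i ⧸ Subgroup.center (G i)) := by
      rw [Subgroup.mem_center_iff]
      intro q
      induction q using QuotientGroup.induction_on with
      | H g =>
        rw [← QuotientGroup.mk_mul, ← QuotientGroup.mk_mul, QuotientGroup.eq]
        have ha := key g⁻¹
        have hb : (x i)⁻¹ * (g⁻¹ * x i * g⁻¹⁻¹ * (x i)⁻¹) * ((x i)⁻¹)⁻¹ ∈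
            Subgroup.center (G i) :=
          Subgroup.Normal.conj_mem inferInstance _ ha _
        have heq : (g * x i)⁻¹ * (x i * g) =
            (x i)⁻¹ * (g⁻¹ * x i * g⁻¹⁻¹ * (x i)⁻¹) * ((x i)⁻¹)⁻¹ := by
          group
        rw [heq]
        exact hb
    rw [hcent i, Subgroup.mem_bot] at hq
    exact (QuotientGroup.eq_one_iff _).mp hq
  exact (Subgroup.mem_center_iff.mp hxi (y i))
end
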